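/- Every rank function ρ on a triangulated category C extends to a rank function on the idempotent completion of C, by assigning to a morphism f : (X,e) → (Y,t) the value ρ(f : X → Y), and the rank of the identity of (X,e) equals ρ(e). In particular, for an idempotent endomorphism t of Y with a splitting triangle arising from a triangle (X,e) →f (Y,t) →g (Z,k) in the idempotent completion, one has ρ(t) = ρ(f) + ρ(g). -/

import Mathlib

open CategoryTheory CategoryTheory.Limits CategoryTheory.Pretriangulated

set_option linter.unusedSectionVars false
set_option linter.unusedVariables false

variable {C : Type*} [Category C] [Preadditive C] [HasZeroObject C]
  [HasShift C ℤ] [∀ n : ℤ, (CategoryTheory.shiftFunctor C n).Additive] [Pretriangulated C]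
  [HasBinaryBiproducts C]

/-- Auxiliary: `biprod.lift` composed with `biprod.map`. -/
lemma my_lift_map' {P A B A' B' : C} (a : P ⟶ A) (b : P ⟶ B) (u : A ⟶ A') (v : B ⟶ B') :
    biprod.lift a b ≫ biprod.map u v = biprod.lift (a ≫ u) (b ≫ v) := by
  apply biprod.hom_ext <;> simp

/-- Auxiliary: rank of a composite is at most the rank of the middle factor. -/
lemma rank_comp_comp_le (ρ : ∀ ⦃X Y : C⦄, (X ⟶ Y) → ℝ)
    (hM5 : ∀ ⦃X Y Z : C⦄ (f : X ⟶ Y) (g : Y ⟶ Z),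
      ρ (f ≫ g) ≤ ρ f ∧ ρ (f ≫ g) ≤ ρ g)
    {A B D E : C} (u : A ⟶ B) (m : B ⟶ D) (v : D ⟶ E) :
    ρ (u ≫ m ≫ v) ≤ ρ m := by
  refine le_trans ((hM5 u (m ≫ v)).2) ((hM5 m v).1)

/-- Auxiliary: decomposition of the rank of a morphism along compatible idempotents. -/
lemma rank_decomp (ρ : ∀ ⦃X Y : C⦄, (X ⟶ Y) → ℝ)
    (hM2 : ∀ ⦃X Y X' Y' : C⦄ (f : X ⟶ Y) (g : X' ⟶ Y'),
      ρ (biprod.map f g) = ρ f + ρ g)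
    (hM5 : ∀ ⦃X Y Z : C⦄ (f : X ⟶ Y) (g : Y ⟶ Z),
      ρ (f ≫ g) ≤ ρ f ∧ ρ (f ≫ g) ≤ ρ g)
    {A B : C} (q : A ⟶ A) (s : B ⟶ B) (m : A ⟶ B)
    (hq : q ≫ q = q) (hs : s ≫ s = s) (hqm : q ≫ m = m ≫ s) :
    ρ m = ρ (q ≫ m) + ρ ((𝟙 A - q) ≫ m) := by
  have key1 : biprod.lift q (𝟙 A - q) ≫
      biprod.map (q ≫ m) ((𝟙 A - q) ≫ m) ≫ biprod.desc s (𝟙 B - s) = m := by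
    rw [← Category.assoc, my_lift_map', biprod.lift_desc]
    simp only [Preadditive.sub_comp, Preadditive.comp_sub, Category.id_comp,
      Category.comp_id, Category.assoc, reassoc_of% hq, reassoc_of% hqm, hqm, hs]
    abel
  have key2 : biprod.desc q (𝟙 A - q) ≫ m ≫ biprod.lift s (𝟙 B - s) =
      biprod.map (q ≫ m) ((𝟙 A - q) ≫ m) := by
    apply biprod.hom_ext' <;> apply biprod.hom_ext <;>
      simp [Preadditive.sub_comp, Preadditive.comp_sub,
        reassoc_of% hq, reassoc_of% hqm, hqm, hs]
  have le1 : ρ m ≤ ρ (q ≫ m) + ρ ((𝟙 A - q) ≫ m) := by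
    calc ρ m = ρ (biprod.lift q (𝟙 A - q) ≫
        biprod.map (q ≫ m) ((𝟙 A - q) ≫ m) ≫ biprod.desc s (𝟙 B - s)) := by rw [key1]
    _ ≤ ρ (biprod.map (q ≫ m) ((𝟙 A - q) ≫ m)) := rank_comp_comp_le ρ hM5 _ _ _
    _ = ρ (q ≫ m) + ρ ((𝟙 A - q) ≫ m) := hM2 _ _
  have le2 : ρ (q ≫ m) + ρ ((𝟙 A - q) ≫ m) ≤ ρ m := by
    calc ρ (q ≫ m) + ρ ((𝟙 A - q) ≫ m)
        = ρ (biprod.map (q ≫ m) ((𝟙 A - q) ≫ m)) := (hM2 _ _).symm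
    _ = ρ (biprod.desc q (𝟙 A - q) ≫ m ≫ biprod.lift s (𝟙 B - s)) := by rw [key2]
    _ ≤ ρ m := rank_comp_comp_le ρ hM5 _ _ _
  linarith

/-- Auxiliary: if `f' ≫ g' = 0` and both are compatible with an idempotent `s`, then
`ρ f' + ρ g' ≤ ρ s`. -/
lemma rank_sum_le (ρ : ∀ ⦃X Y : C⦄, (X ⟶ Y) → ℝ)
    (hM4 : ∀ ⦃X Y Z W : C⦄ (f : X ⟶ Y) (g : Z ⟶ W) (h : Z ⟶ Y),
      ρ f + ρ g ≤ ρ (biprod.map f g + biprod.snd ≫ h ≫ biprod.inl))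
    (hM5 : ∀ ⦃X Y Z : C⦄ (f : X ⟶ Y) (g : Y ⟶ Z),
      ρ (f ≫ g) ≤ ρ f ∧ ρ (f ≫ g) ≤ ρ g)
    {A B D : C} (f' : A ⟶ B) (g' : B ⟶ D) (s : B ⟶ B)
    (hfs : f' ≫ s = f') (hsg : s ≫ g' = g') (hfg : f' ≫ g' = 0) :
    ρ f' + ρ g' ≤ ρ s := by
  have key : biprod.map f' g' + biprod.snd ≫ s ≫ biprod.inl =
      biprod.desc f' (𝟙 B) ≫ s ≫ biprod.lift (𝟙 B) g' := by
    apply biprod.hom_ext' <;> apply biprod.hom_ext <;>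
      simp [reassoc_of% hfs, hfs, hsg, hfg]
  calc ρ f' + ρ g' ≤ ρ (biprod.map f' g' + biprod.snd ≫ s ≫ biprod.inl) := hM4 f' g' s
  _ = ρ (biprod.desc f' (𝟙 B) ≫ s ≫ biprod.lift (𝟙 B) g') := by rw [key]
  _ ≤ ρ s := rank_comp_comp_le ρ hM5 _ _ _

/-- a rank function extends to the idempotent completion; in particular,
for an exact triangle ((X,e),(Y,t),(Z,k),f,g,h) in the idempotent completion (i.e. a
triangle of morphisms compatible with the idempotents which is a retract, with
retraction given by the idempotents, of a distinguished triangle of C), one has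
ρ(t) = ρ(f) + ρ(g), where ρ(t) is the rank of the identity of (Y,t). -/
theorem rank_idempotent_completion (ρ : ∀ ⦃X Y : C⦄, (X ⟶ Y) → ℝ)
    (hnonneg : ∀ ⦃X Y : C⦄ (f : X ⟶ Y), 0 ≤ ρ f)
    (hM1 : ∀ ⦃X Y : C⦄ (f : X ⟶ Y), ρ (f⟦(1 : ℤ)⟧') = ρ f)
    (hM2 : ∀ ⦃X Y X' Y' : C⦄ (f : X ⟶ Y) (g : X' ⟶ Y'),
      ρ (biprod.map f g) = ρ f + ρ g)
    (hM3 : ∀ T ∈ distTriang C, ρ T.mor₁ + ρ T.mor₂ = ρ (𝟙 T.obj₂))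
    (hM4 : ∀ ⦃X Y Z W : C⦄ (f : X ⟶ Y) (g : Z ⟶ W) (h : Z ⟶ Y),
      ρ f + ρ g ≤ ρ (biprod.map f g + biprod.snd ≫ h ≫ biprod.inl))
    (hM5 : ∀ ⦃X Y Z : C⦄ (f : X ⟶ Y) (g : Y ⟶ Z),
      ρ (f ≫ g) ≤ ρ f ∧ ρ (f ≫ g) ≤ ρ g)
    {X Y Z : C} (e : X ⟶ X) (t : Y ⟶ Y) (k : Z ⟶ Z)
    (he : e ≫ e = e) (ht : t ≫ t = t) (hk : k ≫ k = k)
    (f : X ⟶ Y) (g : Y ⟶ Z) (h : Z ⟶ X⟦(1 : ℤ)⟧)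
    (hef : e ≫ f = f) (hft : f ≫ t = f) (htg : t ≫ g = g) (hgk : g ≫ k = g)
    (hkh : k ≫ h = h) (hhe : h ≫ e⟦(1 : ℤ)⟧' = h)
    (T : Triangle C) (hT : T ∈ distTriang C)
    (i : Triangle.mk f g h ⟶ T) (r : T ⟶ Triangle.mk f g h)
    (hir₁ : (i ≫ r).hom₁ = e) (hir₂ : (i ≫ r).hom₂ = t) (hir₃ : (i ≫ r).hom₃ = k) :
    ρ t = ρ f + ρ g := by
  -- Components of the retraction
  have hir1 : i.hom₁ ≫ r.hom₁ = e := hir₁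
  have hir2 : i.hom₂ ≫ r.hom₂ = t := hir₂
  have hir3 : i.hom₃ ≫ r.hom₃ = k := hir₃
  -- Commutation relations from the triangle morphisms
  have hi1 : f ≫ i.hom₂ = i.hom₁ ≫ T.mor₁ := i.comm₁
  have hi2 : g ≫ i.hom₃ = i.hom₂ ≫ T.mor₂ := i.comm₂
  have hr1 : T.mor₁ ≫ r.hom₂ = r.hom₁ ≫ f := r.comm₁
  have hr2 : T.mor₂ ≫ r.hom₃ = r.hom₂ ≫ g := r.comm₂
  dsimp only [Triangle.mk] at hir1 hir2 hir3 hi1 hi2 hr1 hr2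
  -- The idempotent triangle endomorphism of T
  set p1 : T.obj₁ ⟶ T.obj₁ := r.hom₁ ≫ e ≫ i.hom₁ with hp1def
  set p2 : T.obj₂ ⟶ T.obj₂ := r.hom₂ ≫ t ≫ i.hom₂ with hp2def
  set p3 : T.obj₃ ⟶ T.obj₃ := r.hom₃ ≫ k ≫ i.hom₃ with hp3def
  dsimp only [Triangle.mk] at hp1def hp2def hp3def
  have hp1 : p1 ≫ p1 = p1 := by
    simp only [hp1def, Category.assoc, reassoc_of% hir1, reassoc_of% he]
  have hp2 : p2 ≫ p2 = p2 := by
    simp only [hp2def, Category.assoc, reassoc_of% hir2, reassoc_of% ht]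
  have hp3 : p3 ≫ p3 = p3 := by
    simp only [hp3def, Category.assoc, reassoc_of% hir3, reassoc_of% hk]
  have hcomm1 : p1 ≫ T.mor₁ = T.mor₁ ≫ p2 := by
    simp only [hp1def, hp2def, Category.assoc, ← hi1, ← reassoc_of% hi1, reassoc_of% hef,
      reassoc_of% hr1, reassoc_of% hft]
  have hcomm2 : p2 ≫ T.mor₂ = T.mor₂ ≫ p3 := by
    simp only [hp2def, hp3def, Category.assoc, ← hi2, ← reassoc_of% hi2, reassoc_of% htg,
      reassoc_of% hr2, reassoc_of% hgk]
  -- ρ p2 = ρ t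
  have hρp2 : ρ p2 = ρ t := by
    have le1 : ρ p2 ≤ ρ t := by
      rw [hp2def]; exact rank_comp_comp_le ρ hM5 _ _ _
    have le2 : ρ t ≤ ρ p2 := by
      have hkey : i.hom₂ ≫ p2 ≫ r.hom₂ = t := by
        dsimp only [Triangle.mk]
        simp only [hp2def, Category.assoc, reassoc_of% hir2, hir2, reassoc_of% ht, ht]
      calc ρ t = ρ (i.hom₂ ≫ p2 ≫ r.hom₂) := by rw [hkey]; rfl
      _ ≤ ρ p2 := rank_comp_comp_le ρ hM5 _ _ _
    linarith
  -- ρ (p1 ≫ T.mor₁) = ρ f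
  have hw1 : p1 ≫ T.mor₁ = r.hom₁ ≫ f ≫ i.hom₂ := by
    dsimp only [Triangle.mk]
    simp only [hp1def, Category.assoc, ← hi1, reassoc_of% hef]
  have hρ1 : ρ (p1 ≫ T.mor₁) = ρ f := by
    have le1 : ρ (p1 ≫ T.mor₁) ≤ ρ f := by
      rw [hw1]; exact rank_comp_comp_le ρ hM5 _ _ _
    have le2 : ρ f ≤ ρ (p1 ≫ T.mor₁) := by
      have hkey : i.hom₁ ≫ (p1 ≫ T.mor₁) ≫ r.hom₂ = f := by
        dsimp only [Triangle.mk]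
        simp only [hw1]; dsimp only [Triangle.mk]
        simp only [Category.assoc, reassoc_of% hir1, hir2, reassoc_of% hef, hft]
        exact hef
      calc ρ f = ρ (i.hom₁ ≫ (p1 ≫ T.mor₁) ≫ r.hom₂) := by rw [hkey]; rfl
      _ ≤ ρ (p1 ≫ T.mor₁) := rank_comp_comp_le ρ hM5 _ _ _
    linarith
  -- ρ (p2 ≫ T.mor₂) = ρ g
  have hw2 : p2 ≫ T.mor₂ = r.hom₂ ≫ g ≫ i.hom₃ := by
    dsimp only [Triangle.mk]
    simp only [hp2def, Category.assoc, ← hi2, reassoc_of% htg]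
  have hρ2 : ρ (p2 ≫ T.mor₂) = ρ g := by
    have le1 : ρ (p2 ≫ T.mor₂) ≤ ρ g := by
      rw [hw2]; exact rank_comp_comp_le ρ hM5 _ _ _
    have le2 : ρ g ≤ ρ (p2 ≫ T.mor₂) := by
      have hkey : i.hom₂ ≫ (p2 ≫ T.mor₂) ≫ r.hom₃ = g := by
        dsimp only [Triangle.mk]
        simp only [hw2]; dsimp only [Triangle.mk]
        simp only [Category.assoc, reassoc_of% hir2, hir3, reassoc_of% htg, hgk]
        exact htg
      calc ρ g = ρ (i.hom₂ ≫ (p2 ≫ T.mor₂) ≫ r.hom₃) := by rw [hkey]; rfl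
      _ ≤ ρ (p2 ≫ T.mor₂) := rank_comp_comp_le ρ hM5 _ _ _
    linarith
  -- rank decompositions
  have B1 : ρ T.mor₁ = ρ (p1 ≫ T.mor₁) + ρ ((𝟙 T.obj₁ - p1) ≫ T.mor₁) :=
    rank_decomp ρ hM2 hM5 p1 p2 T.mor₁ hp1 hp2 hcomm1
  have B2 : ρ T.mor₂ = ρ (p2 ≫ T.mor₂) + ρ ((𝟙 T.obj₂ - p2) ≫ T.mor₂) :=
    rank_decomp ρ hM2 hM5 p2 p3 T.mor₂ hp2 hp3 hcomm2
  have B3 : ρ (𝟙 T.obj₂) = ρ p2 + ρ (𝟙 T.obj₂ - p2) := by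
    have := rank_decomp ρ hM2 hM5 p2 p2 (𝟙 T.obj₂) hp2 hp2 (by simp)
    simpa using this
  -- f ≫ g = 0
  have hfg : f ≫ g = 0 := by
    have h1 : (f ≫ i.hom₂) ≫ (r.hom₂ ≫ g) = f ≫ g := by
      dsimp only [Triangle.mk]
      simp only [Category.assoc, reassoc_of% hir2, reassoc_of% hft]
    rw [← h1]; dsimp only [Triangle.mk]; rw [hi1, ← hr2]
    simp only [Category.assoc]
    rw [comp_distTriang_mor_zero₁₂_assoc T hT]
    simp
  -- first inequality: ρ f + ρ g ≤ ρ t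
  have C1 : ρ f + ρ g ≤ ρ t := rank_sum_le ρ hM4 hM5 f g t hft htg hfg
  -- second inequality, on the complement
  have hq2 : (𝟙 T.obj₂ - p2) ≫ (𝟙 T.obj₂ - p2) = 𝟙 T.obj₂ - p2 := by
    simp [Preadditive.sub_comp, Preadditive.comp_sub, hp2]
  have heq : (𝟙 T.obj₁ - p1) ≫ T.mor₁ = T.mor₁ ≫ (𝟙 T.obj₂ - p2) := by
    simp [Preadditive.sub_comp, Preadditive.comp_sub, hcomm1]
  have hfs' : ((𝟙 T.obj₁ - p1) ≫ T.mor₁) ≫ (𝟙 T.obj₂ - p2) = (𝟙 T.obj₁ - p1) ≫ T.mor₁ := by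
    rw [heq, Category.assoc, hq2]
  have hsg' : (𝟙 T.obj₂ - p2) ≫ ((𝟙 T.obj₂ - p2) ≫ T.mor₂) = (𝟙 T.obj₂ - p2) ≫ T.mor₂ := by
    rw [← Category.assoc, hq2]
  have hfg' : ((𝟙 T.obj₁ - p1) ≫ T.mor₁) ≫ ((𝟙 T.obj₂ - p2) ≫ T.mor₂) = 0 := by
    rw [heq, Category.assoc, hsg']
    simp [Preadditive.sub_comp, Preadditive.comp_sub, hcomm2,
      comp_distTriang_mor_zero₁₂ T hT, comp_distTriang_mor_zero₁₂_assoc T hT]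
  have C2 : ρ ((𝟙 T.obj₁ - p1) ≫ T.mor₁) + ρ ((𝟙 T.obj₂ - p2) ≫ T.mor₂) ≤
      ρ (𝟙 T.obj₂ - p2) :=
    rank_sum_le ρ hM4 hM5 _ _ _ hfs' hsg' hfg'
  have hM3T := hM3 T hT
  linarith
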